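/- Let f : ℂ² → ℂ be an entire function (differentiable over ℂ on all of ℂ²). Suppose there exist four vectors v₁, v₂, v₃, v₄ ∈ ℂ² that are linearly independent over ℝ such that f(z + vⱼ) = f(z) for all z ∈ ℂ² and all j ∈ {1,2,3,4}. Then f is constant. -/

import Mathlib

open Set Function

/-- A holomorphic (entire) function on ℂ² that is periodic with respect to four
vectors linearly independent over ℝ (a full real lattice) is constant. -/
theorem entire_periodic_four_real_independent_is_constant
    (f : ℂ × ℂ → ℂ) (hf : Differentiable ℂ f)
    (v : Fin 4 → ℂ × ℂ) (hv : LinearIndependent ℝ v)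
    (hper : ∀ (z : ℂ × ℂ) (j : Fin 4), f (z + v j) = f z) :
    ∀ z w : ℂ × ℂ, f z = f w := by
  have hcard : Fintype.card (Fin 4) = Module.finrank ℝ (ℂ × ℂ) := by
    simp [Module.finrank_prod, Complex.finrank_real_complex]
  let b : Module.Basis (Fin 4) ℝ (ℂ × ℂ) := basisOfLinearIndependentOfCardEqFinrank hv hcard
  have hb : ∀ j, b j = v j := fun j => by
    simp [b, coe_basisOfLinearIndependentOfCardEqFinrank]
  have hzper : ∀ (j : Fin 4) (n : ℤ) (z : ℂ × ℂ), f (z + n • v j) = f z := by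
    intro j n z
    exact (Function.Periodic.zsmul (fun z => hper z j) n) z
  have hsum : ∀ (n : Fin 4 → ℤ) (z : ℂ × ℂ), f (z + ∑ j, n j • v j) = f z := by
    intro n
    have key : ∀ s : Finset (Fin 4), ∀ z, f (z + ∑ j ∈ s, n j • v j) = f z := by
      intro s
      induction s using Finset.induction with
      | empty => simp
      | @insert a s hmem ih =>
        intro z
        rw [Finset.sum_insert hmem, add_comm (n a • v a), ← add_assoc, hzper, ih]
    exact key Finset.univ
  set K : Set (ℂ × ℂ) :=
    (fun s : Fin 4 → ℝ => ∑ j, s j • v j) '' (Set.pi univ fun _ => Set.Icc (0:ℝ) 1) with hK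
  have hKc : IsCompact K := by
    apply (isCompact_univ_pi fun _ => isCompact_Icc).image
    fun_prop
  have hrange : range f ⊆ f '' K := by
    rintro _ ⟨z, rfl⟩
    set t : Fin 4 → ℝ := fun j => b.repr z j with ht
    have hz : z = ∑ j, t j • v j := by
      conv_lhs => rw [← b.sum_repr z]
      exact Finset.sum_congr rfl fun j _ => by rw [hb]
    set w : ℂ × ℂ := ∑ j, Int.fract (t j) • v j with hw
    have hwK : w ∈ K :=
      ⟨fun j => Int.fract (t j),
        fun j _ => ⟨Int.fract_nonneg _, le_of_lt (Int.fract_lt_one _)⟩, rfl⟩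
    refine ⟨w, hwK, ?_⟩
    have hdecomp : z = w + ∑ j, (⌊t j⌋ : ℤ) • v j := by
      rw [hz, hw, ← Finset.sum_add_distrib]
      refine Finset.sum_congr rfl fun j _ => ?_
      rw [← Int.cast_smul_eq_zsmul ℝ, ← add_smul, Int.fract_add_floor]
    rw [hdecomp]
    exact (hsum _ w).symm
  have hbdd : Bornology.IsBounded (range f) :=
    ((hKc.image hf.continuous).isBounded).subset hrange
  exact fun z w => hf.apply_eq_apply_of_bounded hbdd z w
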